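/- Let κ be an infinite cardinal. If there exists a strongly independent family on κ⁺ of cardinality κ, then 2^κ = κ⁺. -/

import Mathlib

open Cardinal

/-- if there is a strongly independent family of cardinality `κ` on a set
of cardinality `κ⁺` (every Boolean combination of length `< κ⁺` has size `κ⁺`),
then `2^κ = κ⁺`.  Here `I^0 = I` (sign `false`) and `I^1 = complement` (sign `true`). -/
theorem strongly_independent_implies_CH (κ : Cardinal.{0}) (hκ : ℵ₀ ≤ κ)
    (α : Type) (hα : #α = Order.succ κ) (𝓘 : Set (Set α)) (hcard : #𝓘 = κ)
    (hind : ∀ D ⊆ 𝓘, #D < Order.succ κ → ∀ f : Set α → Bool,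
      #(↥(⋂ I ∈ D, (if f I then Iᶜ else I))) = Order.succ κ) :
    2 ^ κ = Order.succ κ := by
  classical
  have h1 : Order.succ κ ≤ 2 ^ κ := Order.succ_le_of_lt (Cardinal.cantor κ)
  have key : ∀ h : ↥𝓘 → Bool, ∃ x : α, ∀ I : ↥𝓘,
      x ∈ (if h I then (I : Set α)ᶜ else (I : Set α)) := by
    intro h
    have hlt : #𝓘 < Order.succ κ := by rw [hcard]; exact Order.lt_succ κ
    set f : Set α → Bool := fun I => if hI : I ∈ 𝓘 then h ⟨I, hI⟩ else false with hf
    have hc := hind 𝓘 (le_refl _) hlt f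
    have hne : (⋂ I ∈ 𝓘, (if f I then Iᶜ else I)).Nonempty := by
      rw [← Set.nonempty_coe_sort, ← Cardinal.mk_ne_zero_iff, hc]
      exact (lt_of_le_of_lt (zero_le : (0 : Cardinal) ≤ κ) (Order.lt_succ κ)).ne'
    obtain ⟨x, hx⟩ := hne
    refine ⟨x, fun I => ?_⟩
    have hxI := Set.mem_iInter₂.mp hx (I : Set α) I.2
    have hfI : f (I : Set α) = h I := by
      simp only [hf, dif_pos I.2]
    rw [hfI] at hxI
    exact hxI
  choose pick hpick using key
  have hinj : Function.Injective pick := by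
    intro h h' heq
    funext I
    by_contra hne
    have p1 := hpick h I
    have p2 := hpick h' I
    rw [heq] at p1
    cases hb : h I <;> cases hb' : h' I
    · exact hne (hb.trans hb'.symm)
    · rw [hb] at p1; rw [hb'] at p2
      norm_num at p1 p2
      exact p2 p1
    · rw [hb] at p1; rw [hb'] at p2
      norm_num at p1 p2
      exact p1 p2
    · exact hne (hb.trans hb'.symm)
  have h2 : (2 : Cardinal) ^ κ ≤ Order.succ κ := by
    rw [← hα, ← hcard, ← Cardinal.mk_bool, Cardinal.power_def]
    exact Cardinal.mk_le_of_injective hinj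
  exact le_antisymm h2 h1
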